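/- Let R be a commutative ring, let n ≥ 1 and m ≥ 1 be natural numbers, and let α : Fin n → R be such that α i - α j is a unit of R whenever i ≠ j. Set F = (∏_{i : Fin n} (X - C (α i)))^m ∈ R[X]. Then for every g ∈ R[X], F divides g if and only if X^m divides Polynomial.taylor (α i) g for every i : Fin n. Consequently, the ring homomorphism R[X] → ∏_{i : Fin n} R[X]/⟨X^m⟩ sending g to the tuple whose i-th component is the residue of Polynomial.taylor (α i) g modulo X^m has kernel exactly the ideal generated by F, and hence induces an injective ring homomorphism (the generalized Mattson–Solomon map) from R[X]/⟨F⟩ into the product ring ∏_{i : Fin n} R[X]/⟨X^m⟩. -/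

import Mathlib

open Polynomial

private lemma taylor_dvd_iff {R : Type*} [CommRing R] (m : ℕ) (a : R) (g : R[X]) :
    (X - C a) ^ m ∣ g ↔ (X : R[X]) ^ m ∣ Polynomial.taylor a g := by
  have hXa : Polynomial.taylor a (X - C a) = X := by
    simp [taylor_X, taylor_C]
  have hX : Polynomial.taylor (-a) (X : R[X]) = X - C a := by
    simp [taylor_X, sub_eq_add_neg]
  have hp : ∀ (b : R) (p : R[X]) (k : ℕ),
      Polynomial.taylor b (p ^ k) = (Polynomial.taylor b p) ^ k := fun b p k => by
    simpa using map_pow (Polynomial.taylorAlgHom b) p k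
  constructor
  · rintro ⟨c, rfl⟩
    exact ⟨Polynomial.taylor a c, by rw [taylor_mul, hp, hXa]⟩
  · rintro ⟨c, hc⟩
    refine ⟨Polynomial.taylor (-a) c, ?_⟩
    have := congrArg (Polynomial.taylor (-a)) hc
    rwa [taylor_taylor, neg_add_cancel, taylor_zero, taylor_mul, hp, hX] at this

theorem generalized_mattson_solomon {R : Type*} [CommRing R] (n m : ℕ)
    (hn : 1 ≤ n) (hm : 1 ≤ m) (α : Fin n → R)
    (hα : ∀ i j : Fin n, i ≠ j → IsUnit (α i - α j)) :
    (∀ g : R[X],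
      (∏ i : Fin n, (X - C (α i))) ^ m ∣ g ↔
        ∀ i : Fin n, (X : R[X]) ^ m ∣ Polynomial.taylor (α i) g) ∧
    (∀ g : R[X],
      g ∈ Ideal.span {(∏ i : Fin n, (X - C (α i))) ^ m} ↔
        ∀ i : Fin n,
          Ideal.Quotient.mk (Ideal.span {(X : R[X]) ^ m})
            (Polynomial.taylor (α i) g) = 0) ∧
    ∃ ψ : (R[X] ⧸ Ideal.span {(∏ i : Fin n, (X - C (α i))) ^ m}) →+*
        (Fin n → R[X] ⧸ Ideal.span {(X : R[X]) ^ m}),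
      Function.Injective ψ ∧
        ∀ g : R[X],
          ψ (Ideal.Quotient.mk _ g) =
            fun i : Fin n =>
              Ideal.Quotient.mk (Ideal.span {(X : R[X]) ^ m})
                (Polynomial.taylor (α i) g) := by
  have hcop : Pairwise (Function.onFun IsCoprime fun i : Fin n => (X - C (α i)) ^ m) := by
    intro i j hij
    refine IsCoprime.pow ?_
    obtain ⟨u, hu⟩ := hα i j hij
    refine ⟨-C (↑u⁻¹ : R), C (↑u⁻¹ : R), ?_⟩
    have : ((X : R[X]) - C (α j)) - (X - C (α i)) = C (α i - α j) := by
      ring_nf; rw [map_sub]; ring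
    calc -C (↑u⁻¹ : R) * (X - C (α i)) + C (↑u⁻¹ : R) * (X - C (α j))
        = C (↑u⁻¹ : R) * (((X : R[X]) - C (α j)) - (X - C (α i))) := by ring
      _ = C (↑u⁻¹ : R) * C (α i - α j) := by rw [this]
      _ = C ((↑u⁻¹ : R) * (α i - α j)) := by rw [map_mul]
      _ = 1 := by rw [← hu, Units.inv_mul, map_one]
  have key : ∀ g : R[X],
      (∏ i : Fin n, (X - C (α i))) ^ m ∣ g ↔
        ∀ i : Fin n, (X : R[X]) ^ m ∣ Polynomial.taylor (α i) g := by
    intro g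
    rw [← Finset.prod_pow]
    constructor
    · intro hdvd i
      rw [← taylor_dvd_iff]
      exact dvd_trans (Finset.dvd_prod_of_mem (fun j => (X - C (α j)) ^ m) (Finset.mem_univ i)) hdvd
    · intro h
      exact Fintype.prod_dvd_of_coprime hcop fun i => (taylor_dvd_iff m (α i) g).mpr (h i)
  have key2 : ∀ g : R[X],
      g ∈ Ideal.span {(∏ i : Fin n, (X - C (α i))) ^ m} ↔
        ∀ i : Fin n,
          Ideal.Quotient.mk (Ideal.span {(X : R[X]) ^ m})
            (Polynomial.taylor (α i) g) = 0 := by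
    intro g
    rw [Ideal.mem_span_singleton, key g]
    simp only [Ideal.Quotient.eq_zero_iff_mem, Ideal.mem_span_singleton]
  refine ⟨key, key2, ?_⟩
  set I := Ideal.span {(∏ i : Fin n, (X - C (α i))) ^ m}
  let φ : R[X] →+* (Fin n → R[X] ⧸ Ideal.span {(X : R[X]) ^ m}) :=
    Pi.ringHom fun i => (Ideal.Quotient.mk _).comp (Polynomial.taylorAlgHom (α i)).toRingHom
  have hφ : ∀ g, φ g = fun i => Ideal.Quotient.mk (Ideal.span {(X : R[X]) ^ m})
      (Polynomial.taylor (α i) g) := fun g => rfl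
  refine ⟨Ideal.Quotient.lift I φ (fun g hg => by
      rw [hφ]; funext i; exact (key2 g).mp hg i ▸ rfl), ?_, fun g => by
        rw [Ideal.Quotient.lift_mk, hφ]⟩
  rw [injective_iff_map_eq_zero]
  intro x hx
  obtain ⟨g, rfl⟩ := Ideal.Quotient.mk_surjective x
  rw [Ideal.Quotient.eq_zero_iff_mem]
  rw [Ideal.Quotient.lift_mk, hφ] at hx
  exact (key2 g).mpr fun i => congrFun hx i
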